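/- For any real n×m matrix Y (n, m ≥ 1), the L2 biclustering cost satisfies V(Y) ≤ V_R(Y) + V_C(Y), where V(Y) = Σ_{i,j}(Y(i,j) − μ)², V_R(Y) = Σ_j Σ_i (Y(i,j) − μ_j^col)², and V_C(Y) = Σ_i Σ_j (Y(i,j) − μ_i^row)². -/

import Mathlib

open Finset

private lemma key (n m : ℕ) (hn : 1 ≤ n) (hm : 1 ≤ m) (Y : Fin n → Fin m → ℝ) :
    ∑ i, ∑ j, (Y i j - (∑ i, ∑ j, Y i j) / ((n : ℝ) * m)) ^ 2 ≤
      (∑ j, ∑ i, (Y i j - (∑ i, Y i j) / (n : ℝ)) ^ 2) +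
        ∑ i, ∑ j, (Y i j - (∑ j, Y i j) / (m : ℝ)) ^ 2 := by
  have hn0 : (n : ℝ) ≠ 0 := Nat.cast_ne_zero.mpr (by omega)
  have hm0 : (m : ℝ) ≠ 0 := Nat.cast_ne_zero.mpr (by omega)
  set μ := (∑ i, ∑ j, Y i j) / ((n : ℝ) * m) with hμ
  rw [Finset.sum_comm]
  have stepA : ∀ j : Fin m, ∑ i, (Y i j - μ) ^ 2 =
      (∑ i, (Y i j - (∑ i, Y i j) / (n : ℝ)) ^ 2)
        + n * ((∑ i, Y i j) / (n : ℝ) - μ) ^ 2 := by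
    intro j
    set c := (∑ i, Y i j) / (n : ℝ) with hc
    have hzero : ∑ i, (Y i j - c) = 0 := by
      rw [Finset.sum_sub_distrib, Finset.sum_const, Finset.card_univ, Fintype.card_fin,
        nsmul_eq_mul, hc]
      field_simp
      ring
    have hexp : ∀ i, (Y i j - μ) ^ 2 =
        (Y i j - c) ^ 2 + 2 * (c - μ) * (Y i j - c) + (c - μ) ^ 2 := fun i => by ring
    simp_rw [hexp]
    rw [Finset.sum_add_distrib, Finset.sum_add_distrib, ← Finset.mul_sum, hzero,
      Finset.sum_const, Finset.card_univ, Fintype.card_fin, nsmul_eq_mul]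
    ring
  have stepB : ∀ j : Fin m, (n : ℝ) * ((∑ i, Y i j) / (n : ℝ) - μ) ^ 2 ≤
      ∑ i, (Y i j - (∑ j', Y i j') / (m : ℝ)) ^ 2 := by
    intro j
    set b : Fin n → ℝ := fun i => Y i j - (∑ j', Y i j') / (m : ℝ) with hb
    have hS : (∑ i, Y i j) / (n : ℝ) - μ = (∑ i, b i) / n := by
      rw [hμ, hb]
      simp only [Finset.sum_sub_distrib, ← Finset.sum_div]
      field_simp
    rw [hS]
    have h1 : (∑ i, b i) ^ 2 ≤ (n : ℝ) * ∑ i, b i ^ 2 := by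
      have := sq_sum_le_card_mul_sum_sq (s := (Finset.univ : Finset (Fin n))) (f := b)
      simpa [Finset.card_univ] using this
    have hnpos : (0 : ℝ) < n := by positivity
    have heq : (n : ℝ) * ((∑ i, b i) / n) ^ 2 = (∑ i, b i) ^ 2 / n := by
      field_simp
    rw [heq, div_le_iff₀ hnpos]
    linarith [h1]
  calc ∑ j, ∑ i, (Y i j - μ) ^ 2
      = (∑ j, ∑ i, (Y i j - (∑ i, Y i j) / (n : ℝ)) ^ 2)
        + ∑ j, (n : ℝ) * ((∑ i, Y i j) / (n : ℝ) - μ) ^ 2 := by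
        rw [← Finset.sum_add_distrib]; exact Finset.sum_congr rfl fun j _ => stepA j
    _ ≤ (∑ j, ∑ i, (Y i j - (∑ i, Y i j) / (n : ℝ)) ^ 2)
        + ∑ j, ∑ i, (Y i j - (∑ j', Y i j') / (m : ℝ)) ^ 2 := by
        gcongr with j _; exact stepB j
    _ = _ := by congr 1; exact Finset.sum_comm

/-- L2 biclustering cost bound: V(Y) ≤ V_R(Y) + V_C(Y). -/
theorem l2_cost_le_row_add_col (n m : ℕ) (hn : 1 ≤ n) (hm : 1 ≤ m)
    (Y : Fin n → Fin m → ℝ) :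
    (let μ : ℝ := (∑ i, ∑ j, Y i j) / (n * m)
     let μcol : Fin m → ℝ := fun j => (∑ i, Y i j) / n
     let μrow : Fin n → ℝ := fun i => (∑ j, Y i j) / m
     ∑ i, ∑ j, (Y i j - μ) ^ 2 ≤
       (∑ j, ∑ i, (Y i j - μcol j) ^ 2) + (∑ i, ∑ j, (Y i j - μrow i) ^ 2)) := by
  exact key n m hn hm Y
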